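/- For every complete Boolean algebra B the following conditions are equivalent: (a) B is not (ω,2)-distributive; (b) White has a winning strategy in the game G₁ on B; (c) White has a winning strategy in the game G₂ on B. -/

import Mathlib

/-- For `p ∈ B⁺` and a move `q ≤ p`, Black's choice: `q⁰ = q`, `q¹ = p \ q`. -/
def pickMove {B : Type*} [CompleteBooleanAlgebra B] (p q : B) (i : Bool) : B :=
  if i then p \ q else q

section Games

variable {B : Type*} [CompleteBooleanAlgebra B]

/-- White wins a play of `G₁` iff `⨅ₙ pₙ^{iₙ} = 0`. -/
def WinG1 (p : B) (pn : ℕ → B) (i : ℕ → Bool) : Prop :=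
  (⨅ n, pickMove p (pn n) (i n)) = ⊥

/-- White wins a play of `G₂` iff `⨆ₖ ⨅_{n ≥ k} pₙ^{iₙ} = 0`. -/
def WinG2 (p : B) (pn : ℕ → B) (i : ℕ → Bool) : Prop :=
  (⨆ k, ⨅ n, ⨅ _ : k ≤ n, pickMove p (pn n) (i n)) = ⊥

/-- White wins a play of `G₃` iff `⨆_{A ⊆ ω infinite} ⨅_{n ∈ A} pₙ^{iₙ} = 0`. -/
def WinG3 (p : B) (pn : ℕ → B) (i : ℕ → Bool) : Prop :=
  (⨆ A ∈ {A : Set ℕ | A.Infinite}, ⨅ n ∈ A, pickMove p (pn n) (i n)) = ⊥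

/-- White wins a play of `G₄` iff `⨅ₖ ⨆_{n ≥ k} pₙ^{iₙ} = 0`. -/
def WinG4 (p : B) (pn : ℕ → B) (i : ℕ → Bool) : Prop :=
  (⨅ k, ⨆ n, ⨆ _ : k ≤ n, pickMove p (pn n) (i n)) = ⊥

/-- White's moves when following strategy `σ` against Black's play `i`:
the `n`-th move depends on Black's first `n` moves. -/
def whitePlays (σ : List Bool → B) (i : ℕ → Bool) (n : ℕ) : B :=
  σ (List.ofFn fun k : Fin n => i k)

/-- Black's moves when following strategy `τ` against White's play `p, p₀, p₁, …`:
the `n`-th move depends on `p` and on `p₀, …, pₙ`. -/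
def blackPlays (τ : B → List B → Bool) (p : B) (pn : ℕ → B) (n : ℕ) : Bool :=
  τ p (List.ofFn fun k : Fin (n + 1) => pn k)

/-- White has a winning strategy in the game with winning condition `Win`:
an initial move `p ∈ B⁺` and a rule `σ` giving legal moves in `(0,p)`
such that White wins every play in which he follows it. -/
def WhiteWS (Win : B → (ℕ → B) → (ℕ → Bool) → Prop) : Prop :=
  ∃ p : B, p ≠ ⊥ ∧ ∃ σ : List Bool → B,
    (∀ s : List Bool, σ s ∈ Set.Ioo ⊥ p) ∧
    ∀ i : ℕ → Bool, Win p (whitePlays σ i) i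

/-- Black has a winning strategy in the game with winning condition `Win`:
a rule `τ` such that for every legal play of White, Black following `τ` wins
(i.e. White does not win). -/
def BlackWS (Win : B → (ℕ → B) → (ℕ → Bool) → Prop) : Prop :=
  ∃ τ : B → List B → Bool,
    ∀ p : B, p ≠ ⊥ → ∀ pn : ℕ → B, (∀ n, pn n ∈ Set.Ioo ⊥ p) →
      ¬ Win p pn (blackPlays τ p pn)

/-- `aⁱ` for `i ∈ {0,1}`: `a⁰ = a`, `a¹ = aᶜ`. -/
def compPow (a : B) (i : Bool) : B :=
  if i then aᶜ else a

end Games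

/-- A complete Boolean algebra is `(ω,2)`-distributive iff
`⨆_{f : ω → 2} ⨅ₙ aₙ^{f(n)} = 1` for every sequence `⟨aₙ⟩`. -/
def OmegaTwoDistributive (B : Type*) [CompleteBooleanAlgebra B] : Prop :=
  ∀ a : ℕ → B, (⨆ f : ℕ → Bool, ⨅ n, compPow (a n) (f n)) = ⊤

/-- `w : 2^{<ω} → B` satisfies (∗) below `p`: for every `i : ω → 2`,
`⨆_{A ⊆ ω infinite} ⨅_{n ∈ A} w_{i↾n}^{i(n)} = 0`. -/
def SatisfiesStar {B : Type*} [CompleteBooleanAlgebra B] (p : B) (w : List Bool → B) : Prop :=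
  ∀ i : ℕ → Bool,
    (⨆ A ∈ {A : Set ℕ | A.Infinite}, ⨅ n ∈ A,
      pickMove p (w (List.ofFn fun k : Fin n => i k)) (i n)) = ⊥


section Aux

open Classical

variable {B : Type*} [CompleteBooleanAlgebra B]

lemma pickMove_le_of_le {p q : B} (hq : q ≤ p) (i : Bool) : pickMove p q i ≤ p := by
  cases i <;> simp [pickMove, hq, sdiff_le]

lemma pickMove_inf_le (p a : B) (i : Bool) : pickMove p (p ⊓ a) i ≤ compPow a i := by
  cases i
  · simp only [pickMove, compPow, if_false, Bool.false_eq_true]; exact inf_le_right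
  · simp only [pickMove, compPow, if_true]
    rw [sdiff_inf_self_left, sdiff_eq]
    exact inf_le_right

lemma deg_le (p a : B) (h : p ⊓ a ∉ Set.Ioo ⊥ p) :
    p ≤ compPow a (decide (p ⊓ a = ⊥)) := by
  by_cases hb : p ⊓ a = ⊥
  · simp only [hb, decide_true, compPow, if_true]
    exact le_compl_iff_disjoint_right.mpr (disjoint_iff.mpr hb)
  · have hle : p ⊓ a ≤ p := inf_le_left
    have heq : p ⊓ a = p := by
      rcases lt_or_eq_of_le hle with h2 | h2
      · exact absurd ⟨bot_lt_iff_ne_bot.mpr hb, h2⟩ h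
      · exact h2
    simp only [hb, decide_false, compPow, if_false]
    exact (le_inf_iff.mp heq.ge).2

/-- auxiliary list of Black's answers built recursively from `f`. -/
def blackList (f : List Bool → Bool) : ℕ → List Bool
  | 0 => []
  | n + 1 => blackList f n ++ [f (blackList f n)]

lemma blackList_ofFn (f : List Bool → Bool) (n : ℕ) :
    (List.ofFn fun k : Fin n => f (blackList f k)) = blackList f n := by
  induction n with
  | zero => simp [blackList]
  | succ n ih =>
    rw [List.ofFn_succ']
    simp only [List.concat_eq_append, Fin.coe_castSucc, Fin.val_last, blackList]
    rw [ih]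

lemma nondist_to_G2 (h : ¬ OmegaTwoDistributive B) : WhiteWS (WinG2 (B := B)) := by
  rw [OmegaTwoDistributive] at h
  push_neg at h
  obtain ⟨a, ha⟩ := h
  set p : B := (⨆ f : ℕ → Bool, ⨅ n, compPow (a n) (f n))ᶜ with hp
  have hpbot : p ≠ ⊥ := fun hb => ha (compl_eq_bot.mp (hp ▸ hb))
  have hps : ∀ f : ℕ → Bool, p ⊓ ⨅ n, compPow (a n) (f n) = ⊥ := by
    intro f
    have h1 : (⨅ n, compPow (a n) (f n)) ≤ (⨆ f : ℕ → Bool, ⨅ n, compPow (a n) (f n)) :=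
      le_iSup (fun f : ℕ → Bool => ⨅ n, compPow (a n) (f n)) f
    have h2 : p ⊓ (⨅ n, compPow (a n) (f n)) ≤
        (⨆ f : ℕ → Bool, ⨅ n, compPow (a n) (f n))ᶜ ⊓
        (⨆ f : ℕ → Bool, ⨅ n, compPow (a n) (f n)) := by
      rw [hp]; exact inf_le_inf le_rfl h1
    simpa using le_bot_iff.mp (h2.trans (by simp))
  have hr : ∃ r : B, r ∈ Set.Ioo ⊥ p := by
    by_contra hco
    push_neg at hco
    have key : ∀ m, p ≤ compPow (a m) (decide (p ⊓ a m = ⊥)) :=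
      fun m => deg_le p (a m) (hco _)
    have h2 : p ≤ p ⊓ ⨅ m, compPow (a m) (decide (p ⊓ a m = ⊥)) :=
      le_inf le_rfl (le_iInf key)
    rw [hps] at h2
    exact hpbot (le_bot_iff.mp h2)
  obtain ⟨r, hrIoo⟩ := hr
  set q : ℕ → B := fun n =>
    if p ⊓ a (Nat.unpair n).1 ∈ Set.Ioo ⊥ p then p ⊓ a (Nat.unpair n).1 else r with hq
  have hqIoo : ∀ n, q n ∈ Set.Ioo ⊥ p := by
    intro n
    by_cases hc : p ⊓ a (Nat.unpair n).1 ∈ Set.Ioo ⊥ p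
    · rw [hq]; simp only [if_pos hc]; exact hc
    · rw [hq]; simpa [hc] using hrIoo
  refine ⟨p, hpbot, fun l => q l.length, fun l => hqIoo _, ?_⟩
  intro i
  have hw : ∀ n, whitePlays (fun l : List Bool => q l.length) i n = q n := by
    intro n; simp [whitePlays]
  rw [WinG2, iSup_eq_bot]
  intro k
  set T : B := ⨅ n, ⨅ _ : k ≤ n,
    pickMove p (whitePlays (fun l : List Bool => q l.length) i n) (i n) with hT
  have hTle : ∀ n, k ≤ n → T ≤ pickMove p (q n) (i n) := by
    intro n hn
    have h3 := iInf_le (fun n => ⨅ _ : k ≤ n,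
      pickMove p (whitePlays (fun l : List Bool => q l.length) i n) (i n)) n
    rw [hw n] at h3
    exact le_trans (hT ▸ h3) (iInf_le _ hn)
  have hTp : T ≤ p := (hTle k le_rfl).trans (pickMove_le_of_le (hqIoo k).2.le _)
  set j : ℕ → Bool := fun m =>
    if p ⊓ a m ∈ Set.Ioo ⊥ p then i (Nat.pair m k) else decide (p ⊓ a m = ⊥) with hj
  have hTj : ∀ m, T ≤ compPow (a m) (j m) := by
    intro m
    have hkn : k ≤ Nat.pair m k := Nat.right_le_pair m k
    have h1 : T ≤ pickMove p (q (Nat.pair m k)) (i (Nat.pair m k)) := hTle _ hkn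
    have hun : (Nat.unpair (Nat.pair m k)).1 = m := by rw [Nat.unpair_pair]
    by_cases hc : p ⊓ a m ∈ Set.Ioo ⊥ p
    · have hqe : q (Nat.pair m k) = p ⊓ a m := by
        rw [hq]; simp only [hun]; rw [if_pos hc]
      rw [hqe] at h1
      have := h1.trans (pickMove_inf_le p (a m) (i (Nat.pair m k)))
      rw [hj]; simpa [hc] using this
    · have hple : p ≤ compPow (a m) (decide (p ⊓ a m = ⊥)) := deg_le p (a m) hc
      rw [hj]; simpa [hc] using hTp.trans hple
  have hfin : T ≤ p ⊓ ⨅ m, compPow (a m) (j m) := le_inf hTp (le_iInf hTj)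
  rw [hps] at hfin
  exact le_bot_iff.mp hfin

lemma G2_to_G1 (h : WhiteWS (WinG2 (B := B))) : WhiteWS (WinG1 (B := B)) := by
  obtain ⟨p, hp, σ, hσ, hwin⟩ := h
  refine ⟨p, hp, σ, hσ, fun i => ?_⟩
  have h2 := hwin i
  rw [WinG2] at h2
  rw [WinG1, ← le_bot_iff, ← h2]
  exact le_iSup_of_le 0 (le_iInf fun n => le_iInf fun _ => iInf_le _ n)

lemma G1_to_nondist (h : WhiteWS (WinG1 (B := B))) : ¬ OmegaTwoDistributive B := by
  obtain ⟨p, hp, σ, hσ, hwin⟩ := h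
  intro hdist
  set a : ℕ → B := fun m => σ (((Encodable.decode m : Option (List Bool)).getD [])) with ha
  have h1 : p ⊓ (⨆ f : ℕ → Bool, ⨅ n, compPow (a n) (f n)) = p := by
    rw [hdist a, inf_top_eq]
  rw [inf_iSup_eq] at h1
  have hex : ∃ f : ℕ → Bool, p ⊓ ⨅ n, compPow (a n) (f n) ≠ ⊥ := by
    by_contra hc
    push_neg at hc
    rw [iSup_congr hc] at h1
    simp at h1
    exact hp h1.symm
  obtain ⟨f0, hf⟩ := hex
  set g : List Bool → Bool := fun l => f0 (Encodable.encode l) with hg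
  set i : ℕ → Bool := fun n => g (blackList g n) with hi
  have hofn : ∀ n, (List.ofFn fun k : Fin n => i k) = blackList g n := fun n => blackList_ofFn g n
  have hwp : ∀ n, whitePlays σ i n = a (Encodable.encode (blackList g n)) := by
    intro n
    rw [whitePlays, hofn n, ha]
    simp [Encodable.encodek]
  have hule : ∀ n, p ⊓ (⨅ m, compPow (a m) (f0 m)) ≤ pickMove p (whitePlays σ i n) (i n) := by
    intro n
    have hcomp : p ⊓ (⨅ m, compPow (a m) (f0 m)) ≤
        compPow (a (Encodable.encode (blackList g n))) (f0 (Encodable.encode (blackList g n))) :=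
      le_trans inf_le_right (iInf_le _ _)
    have hin : i n = f0 (Encodable.encode (blackList g n)) := rfl
    rw [hwp n, hin]
    cases hcase : f0 (Encodable.encode (blackList g n)) with
    | false => rw [hcase] at hcomp; simpa [pickMove, compPow] using hcomp
    | true =>
        rw [hcase] at hcomp
        simp only [compPow, if_true] at hcomp
        simp only [pickMove, if_true, sdiff_eq]
        exact le_inf inf_le_left hcomp
  have hw := hwin i
  rw [WinG1] at hw
  exact hf (le_bot_iff.mp (by rw [← hw]; exact le_iInf hule))

end Aux

/-- `B` is not `(ω,2)`-distributive iff White has a w.s. in `G₁` iff White has a w.s. in `G₂`. -/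
theorem stmt_3 {B : Type*} [CompleteBooleanAlgebra B] :
    (¬ OmegaTwoDistributive B ↔ WhiteWS (WinG1 (B := B))) ∧
    (WhiteWS (WinG1 (B := B)) ↔ WhiteWS (WinG2 (B := B))) := by
  constructor
  · exact ⟨fun h => G2_to_G1 (nondist_to_G2 h), G1_to_nondist⟩
  · exact ⟨fun h => nondist_to_G2 (G1_to_nondist h), G2_to_G1⟩
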